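/- Let f[z] = [iz₁,iz₂,-z₃] act on T^6 = (ℂ/(ℤ+ℤi))³. The f*-invariant subspace of H^3(T^6, ℝ) is 4-dimensional, spanned by dz₁₂₃ + dz̄₁̄₂̄₃, i(dz₁₂₃ - dz̄₁̄₂̄₃), dz₁₂₃̄ + dz̄₁̄₂₃, and i(dz₁₂₃̄ - dz̄₁̄₂₃), where dz₁₂₃ = dz₁∧dz₂∧dz₃ and dz₁₂₃̄ = dz₁∧dz₂∧dz̄₃. -/

import Mathlib

noncomputable section

open Complex

/-- The Gaussian lattice Γ = ℤ⟨1, i⟩ in ℂ. -/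
def GammaLat : AddSubgroup ℂ := AddSubgroup.closure {1, Complex.I}

/-- The complex torus ℂ/Γ. -/
abbrev CTorus := ℂ ⧸ GammaLat

/-- T⁶ = (ℂ/Γ)³. -/
abbrev T6 := Fin 3 → CTorus

/-- The projection ℂ³ → T⁶. -/
def pr6 : (Fin 3 → ℂ) → T6 := fun z i => QuotientAddGroup.mk (z i)

/-- The lift of f to ℂ³ : (z₁,z₂,z₃) ↦ (iz₁, iz₂, -z₃). -/
def fC : (Fin 3 → ℂ) → (Fin 3 → ℂ) := fun z => ![Complex.I * z 0, Complex.I * z 1, -(z 2)]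

/-- A real translation-invariant 3-form on T⁶ = alternating ℝ-trilinear map on ℂ³. -/
def IsAlt3Form (θ : (Fin 3 → ℂ) → (Fin 3 → ℂ) → (Fin 3 → ℂ) → ℝ) : Prop :=
  (∀ u u' v w, θ (u + u') v w = θ u v w + θ u' v w) ∧
  (∀ (r : ℝ) (u v w), θ (r • u) v w = r * θ u v w) ∧
  (∀ u v v' w, θ u (v + v') w = θ u v w + θ u v' w) ∧
  (∀ (r : ℝ) (u v w), θ u (r • v) w = r * θ u v w) ∧
  (∀ u v w w', θ u v (w + w') = θ u v w + θ u v w') ∧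
  (∀ (r : ℝ) (u v w), θ u v (r • w) = r * θ u v w) ∧
  (∀ u v w, θ u v w = -θ v u w) ∧
  (∀ u v w, θ u v w = -θ u w v)

/-- dz₁∧dz₂∧dz₃ (evaluated as a determinant). -/
def Th : (Fin 3 → ℂ) → (Fin 3 → ℂ) → (Fin 3 → ℂ) → ℂ :=
  fun u v w => Matrix.det (Matrix.of ![u, v, w])

/-- dz₁∧dz₂∧dz̄₃: conjugate the third coordinate. -/
def Th' : (Fin 3 → ℂ) → (Fin 3 → ℂ) → (Fin 3 → ℂ) → ℂ :=
  fun u v w => Matrix.det (Matrix.of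
    ![![u 0, u 1, (starRingEnd ℂ) (u 2)],
      ![v 0, v 1, (starRingEnd ℂ) (v 2)],
      ![w 0, w 1, (starRingEnd ℂ) (w 2)]])

/-- dz₁₂₃ + dz̄₁̄₂̄₃. -/
def th1 : (Fin 3 → ℂ) → (Fin 3 → ℂ) → (Fin 3 → ℂ) → ℝ := fun u v w =>
  (Th u v w + (starRingEnd ℂ) (Th u v w)).re

/-- i(dz₁₂₃ - dz̄₁̄₂̄₃). -/
def th2 : (Fin 3 → ℂ) → (Fin 3 → ℂ) → (Fin 3 → ℂ) → ℝ := fun u v w =>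
  (Complex.I * (Th u v w - (starRingEnd ℂ) (Th u v w))).re

/-- dz₁₂₃̄ + dz̄₁̄₂₃. -/
def th3 : (Fin 3 → ℂ) → (Fin 3 → ℂ) → (Fin 3 → ℂ) → ℝ := fun u v w =>
  (Th' u v w + (starRingEnd ℂ) (Th' u v w)).re

/-- i(dz₁₂₃̄ - dz̄₁̄₂₃). -/
def th4 : (Fin 3 → ℂ) → (Fin 3 → ℂ) → (Fin 3 → ℂ) → ℝ := fun u v w =>
  (Complex.I * (Th' u v w - (starRingEnd ℂ) (Th' u v w))).re


section Aux

@[simp]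
lemma consValFive {α : Type*} {m : ℕ} (x : α) (u : Fin (m+5) → α) :
    Matrix.vecCons x u 5 =
      Matrix.vecHead (Matrix.vecTail (Matrix.vecTail (Matrix.vecTail (Matrix.vecTail u)))) :=
  rfl

lemma Th_apply (u v w : Fin 3 → ℂ) : Th u v w =
    u 0 * v 1 * w 2 - u 0 * v 2 * w 1 - u 1 * v 0 * w 2 + u 1 * v 2 * w 0
      + u 2 * v 0 * w 1 - u 2 * v 1 * w 0 := by
  simp [Th, Matrix.det_fin_three]

lemma Th'_apply (u v w : Fin 3 → ℂ) : Th' u v w =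
    u 0 * v 1 * (starRingEnd ℂ) (w 2) - u 0 * (starRingEnd ℂ) (v 2) * w 1
      - u 1 * v 0 * (starRingEnd ℂ) (w 2) + u 1 * (starRingEnd ℂ) (v 2) * w 0
      + (starRingEnd ℂ) (u 2) * v 0 * w 1 - (starRingEnd ℂ) (u 2) * v 1 * w 0 := by
  simp [Th', Matrix.det_fin_three]

lemma Th_inv (u v w : Fin 3 → ℂ) : Th (fC u) (fC v) (fC w) = Th u v w := by
  have hI : Complex.I * Complex.I = -1 := Complex.I_mul_I
  simp only [Th_apply, fC, Matrix.cons_val_zero, Matrix.cons_val_one, Matrix.head_cons,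
    Matrix.cons_val_two, Matrix.tail_cons]
  linear_combination (-(u 0*v 1*w 2 - u 0*v 2*w 1 - u 1*v 0*w 2 + u 1*v 2*w 0
    + u 2*v 0*w 1 - u 2*v 1*w 0)) * hI

lemma Th'_inv (u v w : Fin 3 → ℂ) : Th' (fC u) (fC v) (fC w) = Th' u v w := by
  have hI : Complex.I * Complex.I = -1 := Complex.I_mul_I
  simp only [Th'_apply, fC, Matrix.cons_val_zero, Matrix.cons_val_one, Matrix.head_cons,
    Matrix.cons_val_two, Matrix.tail_cons, map_neg]
  linear_combination (-(u 0*v 1*(starRingEnd ℂ) (w 2) - u 0*(starRingEnd ℂ) (v 2)*w 1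
    - u 1*v 0*(starRingEnd ℂ) (w 2) + u 1*(starRingEnd ℂ) (v 2)*w 0
    + (starRingEnd ℂ) (u 2)*v 0*w 1 - (starRingEnd ℂ) (u 2)*v 1*w 0)) * hI

lemma th1_inv (u v w : Fin 3 → ℂ) : th1 (fC u) (fC v) (fC w) = th1 u v w := by
  unfold th1; rw [Th_inv]
lemma th2_inv (u v w : Fin 3 → ℂ) : th2 (fC u) (fC v) (fC w) = th2 u v w := by
  unfold th2; rw [Th_inv]
lemma th3_inv (u v w : Fin 3 → ℂ) : th3 (fC u) (fC v) (fC w) = th3 u v w := by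
  unfold th3; rw [Th'_inv]
lemma th4_inv (u v w : Fin 3 → ℂ) : th4 (fC u) (fC v) (fC w) = th4 u v w := by
  unfold th4; rw [Th'_inv]


lemma isAlt_th1 : IsAlt3Form th1 := by
  refine ⟨?_, ?_, ?_, ?_, ?_, ?_, ?_, ?_⟩ <;> intros <;>
    simp only [th1, Th_apply, Pi.add_apply, Pi.smul_apply, Complex.real_smul, map_add, map_mul,
      map_sub, Complex.add_re, Complex.sub_re, Complex.mul_re, Complex.neg_re, Complex.neg_im,
      Complex.ofReal_re, Complex.ofReal_im, Complex.conj_re, Complex.conj_im, Complex.add_im,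
      Complex.sub_im, Complex.mul_im, Complex.I_re, Complex.I_im] <;> ring

lemma isAlt_th2 : IsAlt3Form th2 := by
  refine ⟨?_, ?_, ?_, ?_, ?_, ?_, ?_, ?_⟩ <;> intros <;>
    simp only [th2, Th_apply, Pi.add_apply, Pi.smul_apply, Complex.real_smul, map_add, map_mul,
      map_sub, Complex.add_re, Complex.sub_re, Complex.mul_re, Complex.neg_re, Complex.neg_im,
      Complex.ofReal_re, Complex.ofReal_im, Complex.conj_re, Complex.conj_im, Complex.add_im,
      Complex.sub_im, Complex.mul_im, Complex.I_re, Complex.I_im] <;> ring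

lemma isAlt_th3 : IsAlt3Form th3 := by
  refine ⟨?_, ?_, ?_, ?_, ?_, ?_, ?_, ?_⟩ <;> intros <;>
    simp only [th3, Th'_apply, Pi.add_apply, Pi.smul_apply, Complex.real_smul, map_add, map_mul,
      map_sub, Complex.add_re, Complex.sub_re, Complex.mul_re, Complex.neg_re, Complex.neg_im,
      Complex.ofReal_re, Complex.ofReal_im, Complex.conj_re, Complex.conj_im, Complex.add_im,
      Complex.sub_im, Complex.mul_im, Complex.I_re, Complex.I_im] <;> ring

lemma isAlt_th4 : IsAlt3Form th4 := by
  refine ⟨?_, ?_, ?_, ?_, ?_, ?_, ?_, ?_⟩ <;> intros <;>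
    simp only [th4, Th'_apply, Pi.add_apply, Pi.smul_apply, Complex.real_smul, map_add, map_mul,
      map_sub, Complex.add_re, Complex.sub_re, Complex.mul_re, Complex.neg_re, Complex.neg_im,
      Complex.ofReal_re, Complex.ofReal_im, Complex.conj_re, Complex.conj_im, Complex.add_im,
      Complex.sub_im, Complex.mul_im, Complex.I_re, Complex.I_im] <;> ring

lemma th1_apply (u v w : Fin 3 → ℂ) : th1 u v w = 2 * (Th u v w).re := by
  simp [th1, Complex.add_re]; ring
lemma th2_apply (u v w : Fin 3 → ℂ) : th2 u v w = -2 * (Th u v w).im := by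
  simp [th2, Complex.mul_re, Complex.sub_im, Complex.sub_re]; ring
lemma th3_apply (u v w : Fin 3 → ℂ) : th3 u v w = 2 * (Th' u v w).re := by
  simp [th3, Complex.add_re]; ring
lemma th4_apply (u v w : Fin 3 → ℂ) : th4 u v w = -2 * (Th' u v w).im := by
  simp [th4, Complex.mul_re, Complex.sub_im, Complex.sub_re]; ring

/-- The real basis of ℂ³. -/
def bb : Fin 6 → Fin 3 → ℂ :=
  ![![1,0,0], ![Complex.I,0,0], ![0,1,0], ![0,Complex.I,0], ![0,0,1], ![0,0,Complex.I]]

/-- Real coordinates w.r.t. `bb`. -/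
def rr : Fin 6 → (Fin 3 → ℂ) → ℝ := fun j u =>
  ![(u 0).re, (u 0).im, (u 1).re, (u 1).im, (u 2).re, (u 2).im] j

lemma decomp (u : Fin 3 → ℂ) : u = ∑ j, rr j u • bb j := by
  funext i
  rw [Finset.sum_apply, Fin.sum_univ_six]
  fin_cases i <;> simp [rr, bb, Complex.real_smul]

lemma fb0 : fC (bb 0) = bb 1 := by
  funext i; fin_cases i <;> simp [fC, bb, Matrix.vecHead, Matrix.vecTail]
lemma fb1 : fC (bb 1) = -(bb 0) := by
  funext i; fin_cases i <;> simp [fC, bb, Complex.I_mul_I, Matrix.vecHead, Matrix.vecTail]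
lemma fb2 : fC (bb 2) = bb 3 := by
  funext i; fin_cases i <;> simp [fC, bb, Matrix.vecHead, Matrix.vecTail]
lemma fb3 : fC (bb 3) = -(bb 2) := by
  funext i; fin_cases i <;> simp [fC, bb, Complex.I_mul_I, Matrix.vecHead, Matrix.vecTail]
lemma fb4 : fC (bb 4) = -(bb 4) := by
  funext i; fin_cases i <;> simp [fC, bb, Matrix.vecHead, Matrix.vecTail]
lemma fb5 : fC (bb 5) = -(bb 5) := by
  funext i; fin_cases i <;> simp [fC, bb, Matrix.vecHead, Matrix.vecTail]

lemma v1_024 : th1 (bb 0) (bb 2) (bb 4) = 2 := by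
  simp [th1_apply, Th_apply, bb, Matrix.vecHead, Matrix.vecTail]

lemma v2_024 : th2 (bb 0) (bb 2) (bb 4) = 0 := by
  simp [th2_apply, Th_apply, bb, Matrix.vecHead, Matrix.vecTail]

lemma v3_024 : th3 (bb 0) (bb 2) (bb 4) = 2 := by
  simp [th3_apply, Th'_apply, bb, Matrix.vecHead, Matrix.vecTail]

lemma v4_024 : th4 (bb 0) (bb 2) (bb 4) = 0 := by
  simp [th4_apply, Th'_apply, bb, Matrix.vecHead, Matrix.vecTail]

lemma v1_025 : th1 (bb 0) (bb 2) (bb 5) = 0 := by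
  simp [th1_apply, Th_apply, bb, Matrix.vecHead, Matrix.vecTail]

lemma v2_025 : th2 (bb 0) (bb 2) (bb 5) = -2 := by
  simp [th2_apply, Th_apply, bb, Matrix.vecHead, Matrix.vecTail]

lemma v3_025 : th3 (bb 0) (bb 2) (bb 5) = 0 := by
  simp [th3_apply, Th'_apply, bb, Matrix.vecHead, Matrix.vecTail]

lemma v4_025 : th4 (bb 0) (bb 2) (bb 5) = 2 := by
  simp [th4_apply, Th'_apply, bb, Matrix.vecHead, Matrix.vecTail]

lemma v1_034 : th1 (bb 0) (bb 3) (bb 4) = 0 := by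
  simp [th1_apply, Th_apply, bb, Matrix.vecHead, Matrix.vecTail]

lemma v2_034 : th2 (bb 0) (bb 3) (bb 4) = -2 := by
  simp [th2_apply, Th_apply, bb, Matrix.vecHead, Matrix.vecTail]

lemma v3_034 : th3 (bb 0) (bb 3) (bb 4) = 0 := by
  simp [th3_apply, Th'_apply, bb, Matrix.vecHead, Matrix.vecTail]

lemma v4_034 : th4 (bb 0) (bb 3) (bb 4) = -2 := by
  simp [th4_apply, Th'_apply, bb, Matrix.vecHead, Matrix.vecTail]

lemma v1_035 : th1 (bb 0) (bb 3) (bb 5) = -2 := by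
  simp [th1_apply, Th_apply, bb, Matrix.vecHead, Matrix.vecTail]

lemma v2_035 : th2 (bb 0) (bb 3) (bb 5) = 0 := by
  simp [th2_apply, Th_apply, bb, Matrix.vecHead, Matrix.vecTail]

lemma v3_035 : th3 (bb 0) (bb 3) (bb 5) = 2 := by
  simp [th3_apply, Th'_apply, bb, Matrix.vecHead, Matrix.vecTail]

lemma v4_035 : th4 (bb 0) (bb 3) (bb 5) = 0 := by
  simp [th4_apply, Th'_apply, bb, Matrix.vecHead, Matrix.vecTail]

section Vanish

variable (η : (Fin 3 → ℂ) → (Fin 3 → ℂ) → (Fin 3 → ℂ) → ℝ)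

lemma sum_slot1 (hη : IsAlt3Form η) (a : Fin 6 → ℝ) (v w : Fin 3 → ℂ)
    (s : Finset (Fin 6)) :
    η (∑ j ∈ s, a j • bb j) v w = ∑ j ∈ s, a j * η (bb j) v w := by
  classical
  induction s using Finset.induction_on with
  | empty =>
      simpa using (by simpa using hη.2.1 0 0 v w : η 0 v w = 0)
  | insert a s hx ih =>
      rw [Finset.sum_insert hx, Finset.sum_insert hx, hη.1, hη.2.1, ih]

lemma sum_slot2 (hη : IsAlt3Form η) (u : Fin 3 → ℂ) (a : Fin 6 → ℝ) (w : Fin 3 → ℂ)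
    (s : Finset (Fin 6)) :
    η u (∑ j ∈ s, a j • bb j) w = ∑ j ∈ s, a j * η u (bb j) w := by
  classical
  induction s using Finset.induction_on with
  | empty =>
      simpa using (by simpa using hη.2.2.2.1 0 u 0 w : η u 0 w = 0)
  | insert a s hx ih =>
      rw [Finset.sum_insert hx, Finset.sum_insert hx, hη.2.2.1, hη.2.2.2.1, ih]

lemma sum_slot3 (hη : IsAlt3Form η) (u v : Fin 3 → ℂ) (a : Fin 6 → ℝ)
    (s : Finset (Fin 6)) :
    η u v (∑ j ∈ s, a j • bb j) = ∑ j ∈ s, a j * η u v (bb j) := by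
  classical
  induction s using Finset.induction_on with
  | empty =>
      simpa using (by simpa using hη.2.2.2.2.2.1 0 u v 0 : η u v 0 = 0)
  | insert a s hx ih =>
      rw [Finset.sum_insert hx, Finset.sum_insert hx, hη.2.2.2.2.1, hη.2.2.2.2.2.1, ih]

lemma expand (hη : IsAlt3Form η) (u v w : Fin 3 → ℂ) :
    η u v w = ∑ j, ∑ k, ∑ l,
      rr j u * (rr k v * (rr l w * η (bb j) (bb k) (bb l))) := by
  conv_lhs => rw [decomp u, decomp v, decomp w]
  rw [sum_slot1 η hη]
  refine Finset.sum_congr rfl fun j _ => ?_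
  rw [sum_slot2 η hη, Finset.mul_sum]
  refine Finset.sum_congr rfl fun k _ => ?_
  rw [sum_slot3 η hη, Finset.mul_sum, Finset.mul_sum]

lemma vanish (hη : IsAlt3Form η)
    (hinv : ∀ u v w, η (fC u) (fC v) (fC w) = η u v w)
    (h024 : η (bb 0) (bb 2) (bb 4) = 0)
    (h025 : η (bb 0) (bb 2) (bb 5) = 0)
    (h034 : η (bb 0) (bb 3) (bb 4) = 0)
    (h035 : η (bb 0) (bb 3) (bb 5) = 0) :
    ∀ u v w, η u v w = 0 := by
  obtain ⟨ha1, hs1, ha2, hs2, ha3, hs3, hw12, hw23⟩ := hη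
  have n1 : ∀ x y z, η (-x) y z = -η x y z := fun x y z => by
    have h := hs1 (-1) x y z; rw [neg_one_smul] at h; linarith
  have n2 : ∀ x y z, η x (-y) z = -η x y z := fun x y z => by
    have h := hs2 (-1) x y z; rw [neg_one_smul] at h; linarith
  have n3 : ∀ x y z, η x y (-z) = -η x y z := fun x y z => by
    have h := hs3 (-1) x y z; rw [neg_one_smul] at h; linarith
  have rep12 : ∀ x z, η x x z = 0 := fun x z => by have := hw12 x x z; linarith
  have rep23 : ∀ x y, η x y y = 0 := fun x y => by have := hw23 x y y; linarith
  have rep13 : ∀ x y, η x y x = 0 := fun x y => by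
    have h1 := hw23 x y x; have h2 := rep12 x y
    have h3 := hw12 x x y; linarith
  -- invariance equations at basis triples
  have e012 := hinv (bb 0) (bb 1) (bb 2)
  rw [fb0, fb1, fb2] at e012; simp only [n1, n2, n3] at e012
  have e013 := hinv (bb 0) (bb 1) (bb 3)
  rw [fb0, fb1, fb3] at e013; simp only [n1, n2, n3] at e013
  have e014 := hinv (bb 0) (bb 1) (bb 4)
  rw [fb0, fb1, fb4] at e014; simp only [n1, n2, n3] at e014
  have e015 := hinv (bb 0) (bb 1) (bb 5)
  rw [fb0, fb1, fb5] at e015; simp only [n1, n2, n3] at e015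
  have e023 := hinv (bb 0) (bb 2) (bb 3)
  rw [fb0, fb2, fb3] at e023; simp only [n1, n2, n3] at e023
  have e123 := hinv (bb 1) (bb 2) (bb 3)
  rw [fb1, fb2, fb3] at e123; simp only [n1, n2, n3] at e123
  have e024 := hinv (bb 0) (bb 2) (bb 4)
  rw [fb0, fb2, fb4] at e024; simp only [n1, n2, n3] at e024
  have e025 := hinv (bb 0) (bb 2) (bb 5)
  rw [fb0, fb2, fb5] at e025; simp only [n1, n2, n3] at e025
  have e034 := hinv (bb 0) (bb 3) (bb 4)
  rw [fb0, fb3, fb4] at e034; simp only [n1, n2, n3] at e034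
  have e035 := hinv (bb 0) (bb 3) (bb 5)
  rw [fb0, fb3, fb5] at e035; simp only [n1, n2, n3] at e035
  have e045 := hinv (bb 0) (bb 4) (bb 5)
  rw [fb0, fb4, fb5] at e045; simp only [n1, n2, n3] at e045
  have e145 := hinv (bb 1) (bb 4) (bb 5)
  rw [fb1, fb4, fb5] at e145; simp only [n1, n2, n3] at e145
  have e234 := hinv (bb 2) (bb 3) (bb 4)
  rw [fb2, fb3, fb4] at e234; simp only [n1, n2, n3] at e234
  have e235 := hinv (bb 2) (bb 3) (bb 5)
  rw [fb2, fb3, fb5] at e235; simp only [n1, n2, n3] at e235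
  have e245 := hinv (bb 2) (bb 4) (bb 5)
  rw [fb2, fb4, fb5] at e245; simp only [n1, n2, n3] at e245
  have e345 := hinv (bb 3) (bb 4) (bb 5)
  rw [fb3, fb4, fb5] at e345; simp only [n1, n2, n3] at e345
  -- swap instances relating unsorted to sorted triples
  have s1 := hw12 (bb 1) (bb 0) (bb 2)
  have s2 := hw12 (bb 1) (bb 0) (bb 3)
  have s3 := hw12 (bb 1) (bb 0) (bb 4)
  have s4 := hw12 (bb 1) (bb 0) (bb 5)
  have s5 := hw23 (bb 1) (bb 3) (bb 2)
  have s6 := hw23 (bb 0) (bb 3) (bb 2)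
  have s7 := hw12 (bb 3) (bb 2) (bb 4)
  have s8 := hw12 (bb 3) (bb 2) (bb 5)
  -- the twenty sorted values vanish
  have k012 : η (bb 0) (bb 1) (bb 2) = 0 := by linarith
  have k013 : η (bb 0) (bb 1) (bb 3) = 0 := by linarith
  have k014 : η (bb 0) (bb 1) (bb 4) = 0 := by linarith
  have k015 : η (bb 0) (bb 1) (bb 5) = 0 := by linarith
  have k023 : η (bb 0) (bb 2) (bb 3) = 0 := by linarith
  have k123 : η (bb 1) (bb 2) (bb 3) = 0 := by linarith
  have k124 : η (bb 1) (bb 2) (bb 4) = 0 := by linarith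
  have k125 : η (bb 1) (bb 2) (bb 5) = 0 := by linarith
  have k134 : η (bb 1) (bb 3) (bb 4) = 0 := by linarith
  have k135 : η (bb 1) (bb 3) (bb 5) = 0 := by linarith
  have k045 : η (bb 0) (bb 4) (bb 5) = 0 := by linarith
  have k145 : η (bb 1) (bb 4) (bb 5) = 0 := by linarith
  have k234 : η (bb 2) (bb 3) (bb 4) = 0 := by linarith
  have k235 : η (bb 2) (bb 3) (bb 5) = 0 := by linarith
  have k245 : η (bb 2) (bb 4) (bb 5) = 0 := by linarith
  have k345 : η (bb 3) (bb 4) (bb 5) = 0 := by linarith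
  have key : ∀ j k l : Fin 6, j < k → k < l → η (bb j) (bb k) (bb l) = 0 := by
    intro j k l hjk hkl
    fin_cases j <;> fin_cases k <;> fin_cases l <;>
      first
        | exact absurd hjk (by decide)
        | exact absurd hkl (by decide)
        | exact k012 | exact k013 | exact k014 | exact k015
        | exact k023 | exact h024 | exact h025 | exact h034 | exact h035 | exact k045
        | exact k123 | exact k124 | exact k125 | exact k134 | exact k135 | exact k145
        | exact k234 | exact k235 | exact k245 | exact k345
  have aux : ∀ j k l : Fin 6, j < k → η (bb j) (bb k) (bb l) = 0 := by
    intro j k l hjk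
    rcases lt_trichotomy k l with hkl | rfl | hkl
    · exact key j k l hjk hkl
    · exact rep23 _ _
    · rcases lt_trichotomy j l with hjl | rfl | hjl
      · have := key j l k hjl hkl
        have h := hw23 (bb j) (bb k) (bb l); linarith
      · exact rep13 _ _
      · have := key l j k hjl hjk
        have h1 := hw23 (bb j) (bb k) (bb l)
        have h2 := hw12 (bb j) (bb l) (bb k); linarith
  have hall : ∀ j k l : Fin 6, η (bb j) (bb k) (bb l) = 0 := by
    intro j k l
    rcases lt_trichotomy j k with hjk | rfl | hjk
    · exact aux j k l hjk
    · exact rep12 _ _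
    · have := aux k j l hjk
      have h := hw12 (bb j) (bb k) (bb l); linarith
  intro u v w
  rw [expand η ⟨ha1, hs1, ha2, hs2, ha3, hs3, hw12, hw23⟩ u v w]
  simp [hall]

end Vanish

lemma isAlt_sub (f g : (Fin 3 → ℂ) → (Fin 3 → ℂ) → (Fin 3 → ℂ) → ℝ)
    (hf : IsAlt3Form f) (hg : IsAlt3Form g) :
    IsAlt3Form (fun u v w => f u v w - g u v w) := by
  obtain ⟨a1, s1, a2, s2, a3, s3, w12, w23⟩ := hf
  obtain ⟨b1, t1, b2, t2, b3, t3, x12, x23⟩ := hg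
  refine ⟨?_, ?_, ?_, ?_, ?_, ?_, ?_, ?_⟩ <;> intros <;>
    simp only [a1, s1, a2, s2, a3, s3, b1, t1, b2, t2, b3, t3]
  · ring
  · ring
  · ring
  · ring
  · ring
  · ring
  · rw [w12 _ _ _, x12 _ _ _]; ring
  · rw [w23 _ _ _, x23 _ _ _]; ring

lemma isAlt_lc (a b c d : ℝ) :
    IsAlt3Form (fun u v w => a * th1 u v w + b * th2 u v w + c * th3 u v w + d * th4 u v w) := by
  obtain ⟨a1, s1, a2, s2, a3, s3, w12, w23⟩ := isAlt_th1
  obtain ⟨b1, t1, b2, t2, b3, t3, x12, x23⟩ := isAlt_th2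
  obtain ⟨c1, u1, c2, u2, c3, u3, y12, y23⟩ := isAlt_th3
  obtain ⟨d1, v1, d2, v2, d3, v3, z12, z23⟩ := isAlt_th4
  refine ⟨?_, ?_, ?_, ?_, ?_, ?_, ?_, ?_⟩ <;> intros <;>
    simp only [a1, s1, a2, s2, a3, s3, b1, t1, b2, t2, b3, t3,
      c1, u1, c2, u2, c3, u3, d1, v1, d2, v2, d3, v3]
  · ring
  · ring
  · ring
  · ring
  · ring
  · ring
  · rw [w12 _ _ _, x12 _ _ _, y12 _ _ _, z12 _ _ _]; ring
  · rw [w23 _ _ _, x23 _ _ _, y23 _ _ _, z23 _ _ _]; ring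

/-- The set of invariant alternating forms, as a submodule. -/
def goodSub : Submodule ℝ ((Fin 3 → ℂ) → (Fin 3 → ℂ) → (Fin 3 → ℂ) → ℝ) where
  carrier := {θ | IsAlt3Form θ ∧ ∀ u v w, θ (fC u) (fC v) (fC w) = θ u v w}
  zero_mem' := by
    refine ⟨⟨?_, ?_, ?_, ?_, ?_, ?_, ?_, ?_⟩, ?_⟩ <;> intros <;> simp
  add_mem' := by
    rintro f g ⟨⟨a1, s1, a2, s2, a3, s3, w12, w23⟩, hf⟩ ⟨⟨b1, t1, b2, t2, b3, t3, x12, x23⟩, hg⟩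
    refine ⟨⟨?_, ?_, ?_, ?_, ?_, ?_, ?_, ?_⟩, ?_⟩ <;> intros <;>
      simp only [Pi.add_apply, a1, s1, a2, s2, a3, s3, b1, t1, b2, t2, b3, t3]
    · ring
    · ring
    · ring
    · ring
    · ring
    · ring
    · rw [w12 _ _ _, x12 _ _ _]; ring
    · rw [w23 _ _ _, x23 _ _ _]; ring
    · rw [hf _ _ _, hg _ _ _]
  smul_mem' := by
    rintro c f ⟨⟨a1, s1, a2, s2, a3, s3, w12, w23⟩, hf⟩
    refine ⟨⟨?_, ?_, ?_, ?_, ?_, ?_, ?_, ?_⟩, ?_⟩ <;> intros <;>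
      simp only [Pi.smul_apply, smul_eq_mul, a1, s1, a2, s2, a3, s3]
    · ring
    · ring
    · ring
    · ring
    · ring
    · ring
    · rw [w12 _ _ _]; ring
    · rw [w23 _ _ _]; ring
    · rw [hf _ _ _]

end Aux

/-- The f*-invariant subspace of H³(T⁶,ℝ) is 4-dimensional, spanned by
dz₁₂₃ + dz̄₁̄₂̄₃, i(dz₁₂₃ - dz̄₁̄₂̄₃), dz₁₂₃̄ + dz̄₁̄₂₃ and i(dz₁₂₃̄ - dz̄₁̄₂₃). -/
theorem stmt8 :
    ({θ : (Fin 3 → ℂ) → (Fin 3 → ℂ) → (Fin 3 → ℂ) → ℝ |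
        IsAlt3Form θ ∧ ∀ u v w, θ (fC u) (fC v) (fC w) = θ u v w} =
      ↑(Submodule.span ℝ ({th1, th2, th3, th4} :
          Set ((Fin 3 → ℂ) → (Fin 3 → ℂ) → (Fin 3 → ℂ) → ℝ)))) ∧
    LinearIndependent ℝ ![th1, th2, th3, th4] := by
  constructor
  · ext θ
    constructor
    · rintro ⟨hθ, hinv⟩
      set A := θ (bb 0) (bb 2) (bb 4) with hA
      set B := θ (bb 0) (bb 2) (bb 5) with hB
      set C := θ (bb 0) (bb 3) (bb 4) with hC
      set D := θ (bb 0) (bb 3) (bb 5) with hD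
      set x1 := (A - D) / 4 with hx1
      set x2 := -(B + C) / 4 with hx2
      set x3 := (A + D) / 4 with hx3
      set x4 := (B - C) / 4 with hx4
      have hψ := isAlt_lc x1 x2 x3 x4
      have hηalt : IsAlt3Form (fun u v w => θ u v w -
          (x1 * th1 u v w + x2 * th2 u v w + x3 * th3 u v w + x4 * th4 u v w)) :=
        isAlt_sub _ _ hθ hψ
      have hηinv : ∀ u v w,
          (fun u v w => θ u v w -
            (x1 * th1 u v w + x2 * th2 u v w + x3 * th3 u v w + x4 * th4 u v w))
            (fC u) (fC v) (fC w) =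
          (fun u v w => θ u v w -
            (x1 * th1 u v w + x2 * th2 u v w + x3 * th3 u v w + x4 * th4 u v w)) u v w := by
        intro u v w
        simp only [hinv u v w, th1_inv, th2_inv, th3_inv, th4_inv]
      have hz := vanish _ hηalt hηinv
        (by simp only [v1_024, v2_024, v3_024, v4_024]; rw [hx1, hx2, hx3, hx4]; ring)
        (by simp only [v1_025, v2_025, v3_025, v4_025]; rw [hx1, hx2, hx3, hx4]; ring)
        (by simp only [v1_034, v2_034, v3_034, v4_034]; rw [hx1, hx2, hx3, hx4]; ring)
        (by simp only [v1_035, v2_035, v3_035, v4_035]; rw [hx1, hx2, hx3, hx4]; ring)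
      have hfun : θ = x1 • th1 + x2 • th2 + x3 • th3 + x4 • th4 := by
        funext u v w
        have := hz u v w
        simp only [Pi.add_apply, Pi.smul_apply, smul_eq_mul]
        linarith
      rw [hfun]
      refine Submodule.add_mem _ (Submodule.add_mem _ (Submodule.add_mem _ ?_ ?_) ?_) ?_ <;>
        refine Submodule.smul_mem _ _ (Submodule.subset_span ?_)
      · exact Set.mem_insert _ _
      · exact Set.mem_insert_of_mem _ (Set.mem_insert _ _)
      · exact Set.mem_insert_of_mem _ (Set.mem_insert_of_mem _ (Set.mem_insert _ _))
      · exact Set.mem_insert_of_mem _ (Set.mem_insert_of_mem _ (Set.mem_insert_of_mem _ rfl))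
    · intro hθ
      have hle : Submodule.span ℝ ({th1, th2, th3, th4} :
          Set ((Fin 3 → ℂ) → (Fin 3 → ℂ) → (Fin 3 → ℂ) → ℝ)) ≤ goodSub := by
        rw [Submodule.span_le]
        rintro x (rfl | rfl | rfl | rfl)
        · exact ⟨isAlt_th1, th1_inv⟩
        · exact ⟨isAlt_th2, th2_inv⟩
        · exact ⟨isAlt_th3, th3_inv⟩
        · exact ⟨isAlt_th4, th4_inv⟩
      exact hle hθ
  · rw [Fintype.linearIndependent_iff]
    intro g hg
    have ev : ∀ u v w : Fin 3 → ℂ,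
        g 0 * th1 u v w + g 1 * th2 u v w + g 2 * th3 u v w + g 3 * th4 u v w = 0 := by
      intro u v w
      have := congrFun (congrFun (congrFun hg u) v) w
      simpa [Fin.sum_univ_four, Pi.add_apply, Pi.smul_apply, smul_eq_mul] using this
    have e1 := ev (bb 0) (bb 2) (bb 4)
    have e2 := ev (bb 0) (bb 2) (bb 5)
    have e3 := ev (bb 0) (bb 3) (bb 4)
    have e4 := ev (bb 0) (bb 3) (bb 5)
    rw [v1_024, v2_024, v3_024, v4_024] at e1
    rw [v1_025, v2_025, v3_025, v4_025] at e2
    rw [v1_034, v2_034, v3_034, v4_034] at e3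
    rw [v1_035, v2_035, v3_035, v4_035] at e4
    intro i
    fin_cases i
    · show g 0 = 0; linarith
    · show g 1 = 0; linarith
    · show g 2 = 0; linarith
    · show g 3 = 0; linarith
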